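/- (Zeros of derivatives of the cos^{2K} kernel, upper bound) Let h(θ) = C_K cos^{2K}(θ/2) with K ≥ 1. For each n with 0 ≤ n ≤ 2K-1, the n-th derivative h^{(n)} has exactly n zeros (counted without multiplicity) in the open interval (-π, π); equivalently, h^{(n)}(θ) = 0 for exactly n values of θ in (-π, π). -/

import Mathlib

open Real

section Aux
open Polynomial

noncomputable def Pker (K : ℕ) : ℕ → Polynomial ℝ
  | 0 => 1
  | n + 1 => Polynomial.C (-(2 * (K:ℝ) - n)) * Polynomial.X * Pker K n
      + (1 - Polynomial.X ^ 2) * (Pker K n).derivative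

lemma Pker_natDegree_le (K : ℕ) : ∀ n, (Pker K n).natDegree ≤ n := by
  intro n
  induction n with
  | zero => simp [Pker]
  | succ n ih =>
    rw [Pker]
    refine le_trans (natDegree_add_le _ _) (max_le ?_ ?_)
    · refine le_trans natDegree_mul_le ?_
      have h1 : (Polynomial.C (-(2 * (K:ℝ) - n)) * Polynomial.X).natDegree ≤ 1 :=
        le_trans (natDegree_C_mul_le _ _) (le_of_eq natDegree_X)
      omega
    · rcases Nat.eq_zero_or_pos n with h | h
      · subst h
        simp [Pker, derivative_one]
      · refine le_trans natDegree_mul_le ?_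
        have h1 : ((1 : Polynomial ℝ) - Polynomial.X ^ 2).natDegree ≤ 2 :=
          le_trans (natDegree_sub_le _ _) (by simp)
        have h2 : (Pker K n).derivative.natDegree ≤ n - 1 :=
          le_trans (natDegree_derivative_le _) (by omega)
        omega

lemma Pker_eval_one (K : ℕ) : ∀ n, (Pker K n).eval 1 = ∏ j ∈ Finset.range n, (-(2*(K:ℝ) - j)) := by
  intro n
  induction n with
  | zero => simp [Pker]
  | succ n ih =>
    rw [Pker, Finset.prod_range_succ]
    simp [ih]
    ring

lemma Pker_eval_one_ne_zero (K n : ℕ) (hn : n ≤ 2 * K) : (Pker K n).eval 1 ≠ 0 := by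
  rw [Pker_eval_one]
  refine Finset.prod_ne_zero_iff.mpr ?_
  intro j hj
  have hjn : j < n := Finset.mem_range.mp hj
  have hlt : (j : ℝ) < 2 * K := by
    have : (j : ℝ) < n := by exact_mod_cast hjn
    have h2 : (n : ℝ) ≤ 2 * K := by exact_mod_cast hn
    linarith
  intro hcontra
  have : 2 * (K:ℝ) - j = 0 := by linarith [neg_eq_zero.mp hcontra]
  linarith

lemma Pker_ne_zero (K n : ℕ) (hn : n ≤ 2 * K) : Pker K n ≠ 0 := by
  intro h0
  have := Pker_eval_one_ne_zero K n hn
  rw [h0] at this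
  simp at this

lemma hasDerivAt_aux (m : ℕ) (hm : 1 ≤ m) (q : Polynomial ℝ) (θ : ℝ) :
    HasDerivAt (fun θ => (Real.cos (θ/2))^m * q.eval (Real.sin (θ/2)))
      ((1/2) * ((Real.cos (θ/2))^(m-1) *
        (Polynomial.C (-(m:ℝ)) * Polynomial.X * q
          + (1 - Polynomial.X ^ 2) * q.derivative).eval (Real.sin (θ/2)))) θ := by
  have hhalf : HasDerivAt (fun θ : ℝ => θ / 2) (1/2) θ := by
    simpa using (hasDerivAt_id θ).div_const 2
  have hcos : HasDerivAt (fun θ : ℝ => Real.cos (θ/2)) (-Real.sin (θ/2) * (1/2)) θ :=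
    ((Real.hasDerivAt_cos (θ/2)).comp θ hhalf :)
  have hsin : HasDerivAt (fun θ : ℝ => Real.sin (θ/2)) (Real.cos (θ/2) * (1/2)) θ :=
    ((Real.hasDerivAt_sin (θ/2)).comp θ hhalf :)
  have hpow : HasDerivAt (fun θ : ℝ => (Real.cos (θ/2))^m)
      ((m : ℝ) * (Real.cos (θ/2))^(m-1) * (-Real.sin (θ/2) * (1/2))) θ := hcos.pow m
  have hq : HasDerivAt (fun θ : ℝ => q.eval (Real.sin (θ/2)))
      (q.derivative.eval (Real.sin (θ/2)) * (Real.cos (θ/2) * (1/2))) θ :=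
    ((q.hasDerivAt (Real.sin (θ/2))).comp θ hsin :)
  have : HasDerivAt (fun θ => (Real.cos (θ/2))^m * q.eval (Real.sin (θ/2))) _ θ := hpow.mul hq
  convert this using 1
  have hc2 : Real.cos (θ/2) ^ 2 = 1 - Real.sin (θ/2) ^ 2 := Real.cos_sq' _
  have hmm : (Real.cos (θ/2))^m = (Real.cos (θ/2))^(m-1) * Real.cos (θ/2) := by
    conv_lhs => rw [show m = (m-1) + 1 by omega]
    rw [pow_succ]
  simp only [eval_add, eval_mul, eval_C, eval_X, eval_sub, eval_one, eval_pow]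
  rw [hmm]
  rw [← hc2]
  ring

lemma iteratedDeriv_eq_aux (K : ℕ) (Cc : ℝ) :
    ∀ n, n ≤ 2*K → iteratedDeriv n (fun θ => Cc * (Real.cos (θ/2))^(2*K)) =
      fun θ => Cc * (1/2)^n * (Real.cos (θ/2))^(2*K - n) * (Pker K n).eval (Real.sin (θ/2)) := by
  intro n
  induction n with
  | zero =>
    intro _
    funext θ
    simp [Pker, iteratedDeriv_zero]
  | succ n ih =>
    intro hn
    have hn' : n ≤ 2*K := by omega
    have hm : 1 ≤ 2*K - n := by omega
    rw [iteratedDeriv_succ, ih hn']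
    funext θ
    have key := ((hasDerivAt_aux (2*K - n) hm (Pker K n) θ).const_mul (Cc * (1/2)^n))
    have e1 : (fun θ => Cc * (1/2)^n * ((Real.cos (θ/2))^(2*K-n) * (Pker K n).eval (Real.sin (θ/2))))
        = fun θ => Cc * (1/2)^n * (Real.cos (θ/2))^(2*K - n) * (Pker K n).eval (Real.sin (θ/2)) := by
      funext x; ring
    rw [e1] at key
    rw [key.deriv]
    have hcast : ((2*K - n : ℕ) : ℝ) = 2*(K:ℝ) - n := by
      push_cast [hn']
      ring
    have e2 : Polynomial.C (-((2*K - n : ℕ) : ℝ)) * Polynomial.X * Pker K n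
        + (1 - Polynomial.X ^ 2) * (Pker K n).derivative = Pker K (n+1) := by
      rw [hcast, Pker]
    rw [e2]
    have e3 : 2*K - n - 1 = 2*K - (n+1) := by omega
    rw [e3, pow_succ]
    ring

lemma rolle_finset (g : ℝ → ℝ) (hg : Differentiable ℝ g) :
    ∀ (N : ℕ) (t : Finset ℝ), t.card ≤ N → (∀ x ∈ t, g x = 0) →
      ∃ u : Finset ℝ, u.card = t.card - 1 ∧
        ∀ y ∈ u, deriv g y = 0 ∧ (∃ x₁ ∈ t, x₁ < y) ∧ (∃ x₂ ∈ t, y < x₂) := by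
  intro N
  induction N with
  | zero =>
    intro t ht _
    refine ⟨∅, by simp; omega, by simp⟩
  | succ N ihN =>
    intro t htc htz
    by_cases h1 : t.card ≤ 1
    · exact ⟨∅, by simp; omega, by simp⟩
    push_neg at h1
    have htne : t.Nonempty := Finset.card_pos.mp (by omega)
    set b := t.max' htne with hb
    have hbt : b ∈ t := t.max'_mem htne
    set t' := t.erase b with ht'
    have ht'c : t'.card = t.card - 1 := Finset.card_erase_of_mem hbt
    have ht'ne : t'.Nonempty := Finset.card_pos.mp (by omega)
    set a := t'.max' ht'ne with ha
    have hat' : a ∈ t' := t'.max'_mem ht'ne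
    have hat : a ∈ t := Finset.mem_of_mem_erase hat'
    have hab : a < b := by
      have h1 : a ≤ b := t.le_max' a hat
      have h2 : a ≠ b := Finset.ne_of_mem_erase hat'
      exact lt_of_le_of_ne h1 h2
    obtain ⟨c, hc, hc0⟩ := exists_deriv_eq_zero hab (hg.continuous.continuousOn)
      ((htz a hat).trans (htz b hbt).symm)
    obtain ⟨u', hu'c, hu'⟩ := ihN t' (by omega) (fun x hx => htz x (Finset.mem_of_mem_erase hx))
    have hcu' : c ∉ u' := by
      intro hcmem
      obtain ⟨_, _, x₂, hx₂, hlt⟩ := hu' c hcmem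
      have h4 : x₂ ≤ a := t'.le_max' x₂ hx₂
      have h5 : c < a := lt_of_lt_of_le hlt h4
      exact absurd hc.1 (not_lt.mpr h5.le)
    refine ⟨insert c u', ?_, ?_⟩
    · rw [Finset.card_insert_of_notMem hcu']
      omega
    · intro y hy
      rcases Finset.mem_insert.mp hy with rfl | hy'
      · exact ⟨hc0, ⟨a, hat, hc.1⟩, ⟨b, hbt, hc.2⟩⟩
      · obtain ⟨hd, ⟨x₁, hx₁, h₁⟩, ⟨x₂, hx₂, h₂⟩⟩ := hu' y hy'
        exact ⟨hd, ⟨x₁, Finset.mem_of_mem_erase hx₁, h₁⟩, ⟨x₂, Finset.mem_of_mem_erase hx₂, h₂⟩⟩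

end Aux

theorem cos_pow_kernel_deriv_zeros_exact (K : ℕ) (hK : 1 ≤ K)
    (C : ℝ) (hC : C = (2 : ℝ) ^ (2 * (K : ℤ) - 1) / (((2 * K).choose K : ℝ) * π))
    (h : ℝ → ℝ) (hh : h = fun θ => C * (Real.cos (θ / 2)) ^ (2 * K))
    (n : ℕ) (hn : n ≤ 2 * K - 1) :
    ({θ : ℝ | θ ∈ Set.Ioo (-π) π ∧ iteratedDeriv n h θ = 0}).Finite ∧
    ({θ : ℝ | θ ∈ Set.Ioo (-π) π ∧ iteratedDeriv n h θ = 0}).ncard = n := by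
  have hC0 : 0 < C := by
    rw [hC]
    have hchoose : (0:ℝ) < ((2 * K).choose K : ℝ) := by
      exact_mod_cast Nat.choose_pos (by omega)
    positivity
  have hn2K : n ≤ 2 * K := by omega
  have hn2K' : n < 2 * K := by omega
  subst hh
  have hiter := iteratedDeriv_eq_aux K C
  -- Differentiability of each iterated derivative (for j ≤ 2K-1)
  have hdiff : ∀ j, j ≤ 2 * K - 1 →
      Differentiable ℝ (iteratedDeriv j (fun θ => C * (Real.cos (θ/2))^(2*K))) := by
    intro j hj
    rw [hiter j (by omega)]
    intro θ
    have hm : 1 ≤ 2*K - j := by omega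
    have key := ((hasDerivAt_aux (2*K - j) hm (Pker K j) θ).const_mul (C * (1/2)^j))
    have e1 : (fun θ => C * (1/2)^j * ((Real.cos (θ/2))^(2*K-j) * (Pker K j).eval (Real.sin (θ/2))))
        = fun θ => C * (1/2)^j * (Real.cos (θ/2))^(2*K - j) * (Pker K j).eval (Real.sin (θ/2)) := by
      funext x; ring
    rw [e1] at key
    exact key.differentiableAt
  -- Vanishing at ±π
  have hvanish : ∀ j, j ≤ 2 * K - 1 → ∀ θ : ℝ, Real.cos (θ/2) = 0 →
      iteratedDeriv j (fun θ => C * (Real.cos (θ/2))^(2*K)) θ = 0 := by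
    intro j hj θ hθ
    rw [hiter j (by omega)]
    simp only
    rw [hθ, zero_pow (by omega)]
    ring
  have hcospi : Real.cos (π / 2) = 0 := Real.cos_pi_div_two
  have hcosnegpi : Real.cos ((-π) / 2) = 0 := by
    rw [neg_div, Real.cos_neg]
    exact hcospi
  -- Lower bound: for each j ≤ 2K-1 there is a finset of j zeros in the open interval
  have lower : ∀ j, j ≤ 2 * K - 1 → ∃ s : Finset ℝ, s.card = j ∧
      ∀ x ∈ s, x ∈ Set.Ioo (-π) π ∧
        iteratedDeriv j (fun θ => C * (Real.cos (θ/2))^(2*K)) x = 0 := by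
    intro j
    induction j with
    | zero => exact fun _ => ⟨∅, by simp, by simp⟩
    | succ j ihj =>
      intro hj
      obtain ⟨s, hsc, hs⟩ := ihj (by omega)
      set g := iteratedDeriv j (fun θ => C * (Real.cos (θ/2))^(2*K)) with hg
      have hgd : Differentiable ℝ g := hdiff j (by omega)
      have hnpis : (-π) ∉ s := fun hmem => absurd (hs _ hmem).1.1 (lt_irrefl _)
      have hpis : π ∉ s := fun hmem => absurd (hs _ hmem).1.2 (lt_irrefl _)
      have hnppi : (-π) ∉ insert π s := by
        simp only [Finset.mem_insert]
        push_neg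
        exact ⟨by nlinarith [Real.pi_pos], hnpis⟩
      set t := insert (-π) (insert π s) with htdef
      have htc : t.card = j + 2 := by
        rw [htdef, Finset.card_insert_of_notMem hnppi, Finset.card_insert_of_notMem hpis, hsc]
      have htz : ∀ x ∈ t, g x = 0 := by
        intro x hx
        rcases Finset.mem_insert.mp hx with rfl | hx
        · exact hvanish j (by omega) _ hcosnegpi
        rcases Finset.mem_insert.mp hx with rfl | hx
        · exact hvanish j (by omega) _ hcospi
        · exact (hs x hx).2
      obtain ⟨u, huc, hu⟩ := rolle_finset g hgd t.card t le_rfl htz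
      refine ⟨u, by omega, ?_⟩
      intro y hy
      obtain ⟨hdy, ⟨x₁, hx₁, h₁⟩, ⟨x₂, hx₂, h₂⟩⟩ := hu y hy
      have hb1 : -π ≤ x₁ := by
        rcases Finset.mem_insert.mp hx₁ with rfl | hx₁
        · exact le_refl _
        rcases Finset.mem_insert.mp hx₁ with rfl | hx₁
        · nlinarith [Real.pi_pos]
        · exact (hs _ hx₁).1.1.le
      have hb2 : x₂ ≤ π := by
        rcases Finset.mem_insert.mp hx₂ with rfl | hx₂
        · nlinarith [Real.pi_pos]
        rcases Finset.mem_insert.mp hx₂ with rfl | hx₂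
        · exact le_refl _
        · exact (hs _ hx₂).1.2.le
      refine ⟨⟨lt_of_le_of_lt hb1 h₁, lt_of_lt_of_le h₂ hb2⟩, ?_⟩
      rw [iteratedDeriv_succ, ← hg]
      exact hdy
  -- characterization of the zero set via the polynomial
  set Z := {θ : ℝ | θ ∈ Set.Ioo (-π) π ∧
      iteratedDeriv n (fun θ => C * (Real.cos (θ/2))^(2*K)) θ = 0} with hZ
  have hchar : ∀ θ ∈ Set.Ioo (-π) π,
      (iteratedDeriv n (fun θ => C * (Real.cos (θ/2))^(2*K)) θ = 0 ↔
        (Pker K n).eval (Real.sin (θ/2)) = 0) := by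
    intro θ hθ
    rw [hiter n hn2K]
    simp only
    have hcpos : 0 < Real.cos (θ/2) := by
      apply Real.cos_pos_of_mem_Ioo
      constructor
      · linarith [hθ.1]
      · linarith [hθ.2]
    have hne : C * (1/2)^n * (Real.cos (θ/2))^(2*K - n) ≠ 0 := by positivity
    constructor
    · intro h0
      rcases mul_eq_zero.mp h0 with h0 | h0
      · exact absurd h0 hne
      · exact h0
    · intro h0
      rw [h0, mul_zero]
  -- injectivity of sin(θ/2) on the interval
  have hinj : Set.InjOn (fun θ => Real.sin (θ/2)) (Set.Ioo (-π) π) := by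
    intro x hx y hy hxy
    have hx2 : x/2 ∈ Set.Icc (-(π/2)) (π/2) := ⟨by linarith [hx.1], by linarith [hx.2]⟩
    have hy2 : y/2 ∈ Set.Icc (-(π/2)) (π/2) := ⟨by linarith [hy.1], by linarith [hy.2]⟩
    have := Real.injOn_sin hx2 hy2 hxy
    linarith
  have hZsub : Z ⊆ Set.Ioo (-π) π := fun θ hθ => hθ.1
  set φ : ℝ → ℝ := fun θ => Real.sin (θ/2) with hφ
  have hPne := Pker_ne_zero K n hn2K
  have himgsub : φ '' Z ⊆ ↑((Pker K n).roots.toFinset) := by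
    rintro z ⟨θ, hθ, rfl⟩
    simp only [Finset.coe_sort_coe, Multiset.mem_toFinset, Finset.mem_coe]
    rw [Polynomial.mem_roots']
    exact ⟨hPne, (hchar θ hθ.1).mp hθ.2⟩
  have himgfin : (φ '' Z).Finite :=
    Set.Finite.subset ((Pker K n).roots.toFinset.finite_toSet) himgsub
  have hZfin : Z.Finite := Set.Finite.of_finite_image himgfin (hinj.mono hZsub)
  refine ⟨hZfin, le_antisymm ?_ ?_⟩
  · calc Z.ncard = (φ '' Z).ncard := (Set.ncard_image_of_injOn (hinj.mono hZsub)).symm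
      _ ≤ (↑((Pker K n).roots.toFinset) : Set ℝ).ncard :=
          Set.ncard_le_ncard himgsub ((Pker K n).roots.toFinset.finite_toSet)
      _ = (Pker K n).roots.toFinset.card := Set.ncard_coe_finset _
      _ ≤ Multiset.card (Pker K n).roots := Multiset.toFinset_card_le _
      _ ≤ (Pker K n).natDegree := Polynomial.card_roots' _
      _ ≤ n := Pker_natDegree_le K n
  · obtain ⟨s, hsc, hs⟩ := lower n hn
    have hsub : (↑s : Set ℝ) ⊆ Z := by
      intro x hx
      exact hs x hx
    calc (n : ℕ) = s.card := hsc.symm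
      _ = (↑s : Set ℝ).ncard := (Set.ncard_coe_finset _).symm
      _ ≤ Z.ncard := Set.ncard_le_ncard hsub hZfin
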